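/- Let p ≥ 1 and let P be a closed polygon in ℝ² whose vertices have a bounding box of side lengths d_x in the x-direction and d_y in the y-direction. Then the perimeter of P, with edge lengths measured in the p-norm, is at least 2 · (d_x^p + d_y^p)^{1/p}. -/

import Mathlib

open Classical

/-- The `p`-norm distance between two points of `ℝ²`. -/
noncomputable def pdist (p : ℝ) (a b : ℝ × ℝ) : ℝ :=
  (|a.1 - b.1| ^ p + |a.2 - b.2| ^ p) ^ (1 / p)

/-- The perimeter of the closed polygon (cyclic sequence of vertices) given by
the list `L`: the sum of the `p`-norm distances between cyclically consecutive
vertices. -/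
noncomputable def cycleLength (p : ℝ) (L : List (ℝ × ℝ)) : ℝ :=
  ((L.zip (L.rotate 1)).map fun e => pdist p e.1 e.2).sum

namespace PolyAux

/-- Last element of a list, with default. -/
def lastD : List (ℝ × ℝ) → ℝ × ℝ → ℝ × ℝ
  | [], c => c
  | x :: xs, _ => lastD xs x

lemma lastD_concat (c z : ℝ × ℝ) (A : List (ℝ × ℝ)) : lastD (A ++ [z]) c = z := by
  induction A generalizing c with
  | nil => simp [lastD]
  | cons x xs ih => simpa [lastD] using ih x

/-- Variation of the path `c :: M` under `f`. -/
noncomputable def pvar (f : ℝ × ℝ → ℝ) : ℝ × ℝ → List (ℝ × ℝ) → ℝ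
  | _, [] => 0
  | c, x :: xs => |f c - f x| + pvar f x xs

/-- Cyclic variation of `L` under `f`. -/
noncomputable def var (f : ℝ × ℝ → ℝ) (L : List (ℝ × ℝ)) : ℝ :=
  ((L.zip (L.rotate 1)).map fun e => |f e.1 - f e.2|).sum

lemma pvar_nonneg (f : ℝ × ℝ → ℝ) (c : ℝ × ℝ) (M : List (ℝ × ℝ)) : 0 ≤ pvar f c M := by
  induction M generalizing c with
  | nil => simp [pvar]
  | cons x xs ih => simpa [pvar] using add_nonneg (abs_nonneg _) (ih x)

lemma pvar_last (f : ℝ × ℝ → ℝ) (c : ℝ × ℝ) (M : List (ℝ × ℝ)) :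
    |f c - f (lastD M c)| ≤ pvar f c M := by
  induction M generalizing c with
  | nil => simp [pvar, lastD]
  | cons x xs ih =>
    simp only [pvar, lastD]
    calc |f c - f (lastD xs x)| ≤ |f c - f x| + |f x - f (lastD xs x)| := abs_sub_le _ _ _
      _ ≤ |f c - f x| + pvar f x xs := by gcongr; exact ih x

lemma pvar_mem (f : ℝ × ℝ → ℝ) {b : ℝ × ℝ} (M : List (ℝ × ℝ)) :
    ∀ c, b ∈ M → |f c - f b| + |f b - f (lastD M c)| ≤ pvar f c M := by
  induction M with
  | nil => intro c hb; simp at hb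
  | cons x xs ih =>
    intro c hb
    simp only [pvar, lastD]
    rcases List.mem_cons.1 hb with rfl | hb
    · gcongr
      exact pvar_last f b xs
    · calc |f c - f b| + |f b - f (lastD xs x)|
          ≤ (|f c - f x| + |f x - f b|) + |f b - f (lastD xs x)| := by
            gcongr; exact abs_sub_le _ _ _
        _ = |f c - f x| + (|f x - f b| + |f b - f (lastD xs x)|) := by ring
        _ ≤ |f c - f x| + pvar f x xs := by gcongr; exact ih x hb

lemma pvar_append (f : ℝ × ℝ → ℝ) (z : ℝ × ℝ) (A : List (ℝ × ℝ)) :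
    ∀ c, pvar f c (A ++ [z]) = pvar f c A + |f (lastD A c) - f z| := by
  induction A with
  | nil => intro c; simp [pvar, lastD]
  | cons x xs ih =>
    intro c
    simp only [List.cons_append, pvar, lastD, List.append_eq, ih x]
    ring

lemma var_cons (f : ℝ × ℝ → ℝ) (x : ℝ × ℝ) (xs : List (ℝ × ℝ)) :
    var f (x :: xs) = pvar f x (xs ++ [x]) := by
  have key : ∀ (ys : List (ℝ × ℝ)) (c y : ℝ × ℝ),
      (((c :: ys).zip (ys ++ [y])).map fun e => |f e.1 - f e.2|).sum = pvar f c (ys ++ [y]) := by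
    intro ys
    induction ys with
    | nil => intro c y; simp [pvar]
    | cons a ys ih => intro c y; simp [pvar, ih a]
  have hrot : (x :: xs).rotate 1 = xs ++ [x] := by
    simpa using List.rotate_cons_succ xs x 0
  rw [var, hrot, key]

lemma var_rotate_one (f : ℝ × ℝ → ℝ) (L : List (ℝ × ℝ)) : var f (L.rotate 1) = var f L := by
  cases L with
  | nil => simp
  | cons x xs =>
    have hrot : (x :: xs).rotate 1 = xs ++ [x] := by
      simpa using List.rotate_cons_succ xs x 0
    rw [hrot, var_cons]
    cases xs with
    | nil => simp [var_cons]
    | cons y ys =>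
      have h1 : var f ((y :: ys) ++ [x]) = pvar f y ((ys ++ [x]) ++ [y]) := by
        simpa using var_cons f y (ys ++ [x])
      rw [h1, pvar_append, lastD_concat]
      simp only [List.cons_append, pvar, List.append_eq, pvar_append, lastD_concat]
      rw [abs_sub_comm (f x) (f y)]
      ring

lemma var_rotate (f : ℝ × ℝ → ℝ) (L : List (ℝ × ℝ)) (n : ℕ) : var f (L.rotate n) = var f L := by
  induction n with
  | zero => simp
  | succ n ih =>
    have : L.rotate (n + 1) = (L.rotate n).rotate 1 := by rw [List.rotate_rotate]
    rw [this, var_rotate_one, ih]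

lemma key_var (f : ℝ × ℝ → ℝ) {a b : ℝ × ℝ} {L : List (ℝ × ℝ)} (ha : a ∈ L) (hb : b ∈ L) :
    2 * |f a - f b| ≤ var f L := by
  obtain ⟨s, t, rfl⟩ := List.append_of_mem ha
  have hrot : (s ++ a :: t).rotate s.length = a :: (t ++ s) := by
    rw [List.rotate_eq_drop_append_take (by simp), List.drop_left, List.take_left]
    simp
  set xs := t ++ s with hxs
  have hbmem : b ∈ a :: xs := by
    rw [← hrot]; exact (List.mem_rotate).2 hb
  have hbmem' : b ∈ xs ++ [a] := by
    rcases List.mem_cons.1 hbmem with rfl | h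
    · exact List.mem_append.2 (Or.inr (List.mem_singleton.2 rfl))
    · exact List.mem_append.2 (Or.inl h)
  have hkey := pvar_mem f (xs ++ [a]) a hbmem'
  rw [lastD_concat] at hkey
  have hvar : var f (s ++ a :: t) = pvar f a (xs ++ [a]) := by
    rw [← var_rotate f (s ++ a :: t) s.length, hrot, var_cons]
  rw [hvar]
  calc 2 * |f a - f b| = |f a - f b| + |f b - f a| := by rw [abs_sub_comm (f b) (f a)]; ring
    _ ≤ pvar f a (xs ++ [a]) := hkey

lemma two_point_minkowski {p : ℝ} (hp : 1 ≤ p) {a b c d : ℝ} (ha : 0 ≤ a) (hb : 0 ≤ b)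
    (hc : 0 ≤ c) (hd : 0 ≤ d) :
    ((a + c) ^ p + (b + d) ^ p) ^ (1 / p) ≤ (a ^ p + b ^ p) ^ (1 / p) + (c ^ p + d ^ p) ^ (1 / p) := by
  have := Real.Lp_add_le (Finset.univ : Finset (Fin 2)) ![a, b] ![c, d] hp
  simpa [Fin.sum_univ_two, abs_of_nonneg, ha, hb, hc, hd, abs_of_nonneg (add_nonneg ha hc),
    abs_of_nonneg (add_nonneg hb hd)] using this

lemma lp_sum {p : ℝ} (hp : 1 ≤ p) :
    ∀ (E : List (ℝ × ℝ)), (∀ e ∈ E, 0 ≤ e.1 ∧ 0 ≤ e.2) →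
      ((E.map Prod.fst).sum ^ p + (E.map Prod.snd).sum ^ p) ^ (1 / p) ≤
        (E.map fun e => (e.1 ^ p + e.2 ^ p) ^ (1 / p)).sum := by
  have hp0 : p ≠ 0 := by positivity
  intro E
  induction E with
  | nil =>
    intro _
    simp [Real.zero_rpow hp0, Real.zero_rpow (inv_ne_zero hp0), one_div]
  | cons e E ih =>
    intro hE
    have he := hE e (List.mem_cons_self (a := e) (l := E))
    have hE' : ∀ x ∈ E, 0 ≤ x.1 ∧ 0 ≤ x.2 := fun x hx => hE x (List.mem_cons_of_mem e hx)
    have hS1 : 0 ≤ (E.map Prod.fst).sum := by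
      apply List.sum_nonneg; intro x hx
      obtain ⟨y, hy, rfl⟩ := List.mem_map.1 hx
      exact (hE' y hy).1
    have hS2 : 0 ≤ (E.map Prod.snd).sum := by
      apply List.sum_nonneg; intro x hx
      obtain ⟨y, hy, rfl⟩ := List.mem_map.1 hx
      exact (hE' y hy).2
    simp only [List.map_cons, List.sum_cons]
    calc ((e.1 + (E.map Prod.fst).sum) ^ p + (e.2 + (E.map Prod.snd).sum) ^ p) ^ (1 / p)
        ≤ (e.1 ^ p + e.2 ^ p) ^ (1 / p) +
          ((E.map Prod.fst).sum ^ p + (E.map Prod.snd).sum ^ p) ^ (1 / p) :=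
          two_point_minkowski hp he.1 he.2 hS1 hS2
      _ ≤ (e.1 ^ p + e.2 ^ p) ^ (1 / p) + (E.map fun e => (e.1 ^ p + e.2 ^ p) ^ (1 / p)).sum := by
          gcongr; exact ih hE'

end PolyAux

open PolyAux

theorem polygon_perimeter_bounding_box (p : ℝ) (hp : 1 ≤ p)
    (L : List (ℝ × ℝ)) (xmin xmax ymin ymax : ℝ)
    (hxlo : ∀ v ∈ L, xmin ≤ v.1) (hxhi : ∀ v ∈ L, v.1 ≤ xmax)
    (hylo : ∀ v ∈ L, ymin ≤ v.2) (hyhi : ∀ v ∈ L, v.2 ≤ ymax)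
    (hxlo' : ∃ v ∈ L, v.1 = xmin) (hxhi' : ∃ v ∈ L, v.1 = xmax)
    (hylo' : ∃ v ∈ L, v.2 = ymin) (hyhi' : ∃ v ∈ L, v.2 = ymax) :
    2 * ((xmax - xmin) ^ p + (ymax - ymin) ^ p) ^ (1 / p) ≤ cycleLength p L := by
  have hp0 : (0:ℝ) < p := lt_of_lt_of_le one_pos hp
  obtain ⟨va, hva, hva'⟩ := hxlo'
  obtain ⟨vb, hvb, hvb'⟩ := hxhi'
  obtain ⟨vc, hvc, hvc'⟩ := hylo'
  obtain ⟨vd, hvd, hvd'⟩ := hyhi'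
  have hdx : 0 ≤ xmax - xmin := by
    have := hxlo vb hvb; rw [hvb'] at this; linarith
  have hdy : 0 ≤ ymax - ymin := by
    have := hylo vd hvd; rw [hvd'] at this; linarith
  set E : List (ℝ × ℝ) := (L.zip (L.rotate 1)).map fun e => (|e.1.1 - e.2.1|, |e.1.2 - e.2.2|)
    with hE
  have hEfst : (E.map Prod.fst).sum = var (fun v => v.1) L := by
    simp [hE, var, List.map_map, Function.comp_def]
  have hEsnd : (E.map Prod.snd).sum = var (fun v => v.2) L := by
    simp [hE, var, List.map_map, Function.comp_def]
  have hEcyc : (E.map fun e => (e.1 ^ p + e.2 ^ p) ^ (1 / p)).sum = cycleLength p L := by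
    simp [hE, cycleLength, pdist, List.map_map, Function.comp_def]
  have hEpos : ∀ e ∈ E, 0 ≤ e.1 ∧ 0 ≤ e.2 := by
    intro e he
    obtain ⟨y, _, rfl⟩ := List.mem_map.1 he
    exact ⟨abs_nonneg _, abs_nonneg _⟩
  have hvarx : 2 * (xmax - xmin) ≤ var (fun v => v.1) L := by
    have h := key_var (fun v => v.1) hvb hva
    beta_reduce at h
    rw [hvb', hva', abs_of_nonneg hdx] at h
    exact h
  have hvary : 2 * (ymax - ymin) ≤ var (fun v => v.2) L := by
    have h := key_var (fun v => v.2) hvd hvc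
    beta_reduce at h
    rw [hvd', hvc', abs_of_nonneg hdy] at h
    exact h
  have hvarx0 : 0 ≤ var (fun v => v.1) L := by
    apply List.sum_nonneg; intro x hx
    obtain ⟨y, _, rfl⟩ := List.mem_map.1 hx; exact abs_nonneg _
  have hvary0 : 0 ≤ var (fun v => v.2) L := by
    apply List.sum_nonneg; intro x hx
    obtain ⟨y, _, rfl⟩ := List.mem_map.1 hx; exact abs_nonneg _
  have step2 := lp_sum hp E hEpos
  rw [hEfst, hEsnd, hEcyc] at step2
  have h2 : ((2 * (xmax - xmin)) ^ p + (2 * (ymax - ymin)) ^ p) ^ (1 / p)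
      = 2 * ((xmax - xmin) ^ p + (ymax - ymin) ^ p) ^ (1 / p) := by
    rw [Real.mul_rpow (by norm_num) hdx, Real.mul_rpow (by norm_num) hdy, ← mul_add,
      Real.mul_rpow (by positivity) (by positivity)]
    rw [← Real.rpow_mul (by norm_num : (0:ℝ) ≤ 2)]
    rw [mul_one_div_cancel (ne_of_gt hp0)]
    norm_num
  calc 2 * ((xmax - xmin) ^ p + (ymax - ymin) ^ p) ^ (1 / p)
      = ((2 * (xmax - xmin)) ^ p + (2 * (ymax - ymin)) ^ p) ^ (1 / p) := h2.symm
    _ ≤ (var (fun v => v.1) L ^ p + var (fun v => v.2) L ^ p) ^ (1 / p) := by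
        apply Real.rpow_le_rpow (by positivity) _ (by positivity)
        exact add_le_add (Real.rpow_le_rpow (mul_nonneg (by norm_num) hdx) hvarx hp0.le)
          (Real.rpow_le_rpow (mul_nonneg (by norm_num) hdy) hvary hp0.le)
    _ ≤ cycleLength p L := step2
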